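/- arXiv:1505.05291 — 2 statements merged into one kernel-verified Lean document; each statement's English description precedes it below -/
import Mathlib

section
/- Let L ∈ ℕ ∪ {0}, set p = 2^{-L}, and let x be a sequence with ‖x‖_{ℓ^2} = 1. If ‖x‖_{ℓ^p}^p ≤ κ^{1-p/2} for some κ > 0, then ‖x‖_{ℓ^1}^2 ≤ κ. -/
/-- Let `L ∈ ℕ`, `p = 2^{-L}`, and `x` a sequence with `‖x‖_{ℓ²} = 1`.
If `‖x‖_{ℓ^p}^p ≤ κ^{1-p/2}` for some `κ > 0`, then `‖x‖_{ℓ^1}^2 ≤ κ`. -/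
theorem stmt_3 (x : ℕ → ℂ) (L : ℕ) (p κ : ℝ)
    (hp : p = (2 : ℝ) ^ (-(L : ℝ)))
    (hκ : 0 < κ)
    (hl2 : ∑' j, ‖x j‖ ^ (2 : ℝ) = 1)
    (hsum2 : Summable fun j => ‖x j‖ ^ (2 : ℝ))
    (hsum : Summable fun j => ‖x j‖ ^ p)
    (hlp : ∑' j, ‖x j‖ ^ p ≤ κ ^ (1 - p / 2)) :
    Summable (fun j => ‖x j‖) ∧
      (∑' j, ‖x j‖) ^ 2 ≤ κ := by
  set a : ℕ → ℝ := fun j => ‖x j‖ with ha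
  have ha0 : ∀ j, 0 ≤ a j := fun j => norm_nonneg _
  have hp0 : 0 < p := hp ▸ Real.rpow_pos_of_pos two_pos _
  have hp1 : p ≤ 1 := by
    rw [hp]
    calc (2:ℝ) ^ (-(L:ℝ)) ≤ (2:ℝ) ^ (0:ℝ) := by
          apply Real.rpow_le_rpow_of_exponent_le one_le_two
          simp
      _ = 1 := Real.rpow_zero 2
  rcases eq_or_lt_of_le hp1 with hpe | hplt
  · -- p = 1
    have hs : Summable a := by
      have : (fun j => a j ^ p) = a := by
        funext j; rw [hpe, Real.rpow_one]
      rwa [this] at hsum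
    refine ⟨hs, ?_⟩
    have h1 : ∑' j, a j ≤ κ ^ (1 - p / 2) := by
      have : (fun j => a j ^ p) = a := by
        funext j; rw [hpe, Real.rpow_one]
      rwa [this] at hlp
    have hexp : 1 - p / 2 = (1:ℝ)/2 := by rw [hpe]; norm_num
    rw [hexp] at h1
    have := pow_le_pow_left₀ (tsum_nonneg ha0) h1 2
    calc (∑' j, a j) ^ 2 ≤ (κ ^ ((1:ℝ)/2)) ^ 2 := this
      _ = κ := by
          rw [← Real.rpow_natCast (κ ^ ((1:ℝ)/2)) 2, ← Real.rpow_mul hκ.le]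
          norm_num
  · -- p < 1
    have h2p : 0 < 2 - p := by linarith
    have h1p : 0 < 1 - p := by linarith
    have hcj : Real.HolderConjugate (2 - p) ((2 - p) / (1 - p)) := by
      exact (Real.holderConjugate_iff_eq_conjExponent (by linarith)).mpr (by ring)
    set f : ℕ → ℝ := fun j => a j ^ (p / (2 - p)) with hf
    set g : ℕ → ℝ := fun j => a j ^ (2 * (1 - p) / (2 - p)) with hg
    have hfg : ∀ j, f j * g j = a j := by
      intro j
      rw [hf, hg]
      simp only
      rw [← Real.rpow_add' (ha0 j) (ne_of_gt (by rw [← add_div]; apply div_pos <;> linarith))]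
      have : p / (2 - p) + 2 * (1 - p) / (2 - p) = 1 := by field_simp; ring
      rw [this, Real.rpow_one]
    have hfP : ∀ j, f j ^ (2 - p) = a j ^ p := by
      intro j
      rw [hf]; simp only
      rw [← Real.rpow_mul (ha0 j), div_mul_cancel₀ _ h2p.ne']
    have hgQ : ∀ j, g j ^ ((2 - p) / (1 - p)) = a j ^ (2:ℝ) := by
      intro j
      rw [hg]; simp only
      rw [← Real.rpow_mul (ha0 j)]
      congr 1
      field_simp
    have hfsum : Summable fun j => f j ^ (2 - p) := by
      simpa only [hfP] using hsum
    have hgsum : Summable fun j => g j ^ ((2 - p) / (1 - p)) := by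
      simpa only [hgQ] using hsum2
    obtain ⟨hS, hB⟩ := Real.summable_and_inner_le_Lp_mul_Lq_tsum_of_nonneg hcj
      (fun j => Real.rpow_nonneg (ha0 j) _) (fun j => Real.rpow_nonneg (ha0 j) _) hfsum hgsum
    have hS' : Summable a := by
      have : (fun j => f j * g j) = a := funext hfg
      rwa [this] at hS
    refine ⟨hS', ?_⟩
    have hB' : ∑' j, a j ≤ (∑' j, a j ^ p) ^ (1 / (2 - p)) := by
      calc ∑' j, a j = ∑' j, f j * g j := by simp_rw [hfg]
        _ ≤ (∑' j, f j ^ (2 - p)) ^ (1/(2-p)) * (∑' j, g j ^ ((2-p)/(1-p))) ^ (1/((2-p)/(1-p))) := hB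
        _ = (∑' j, a j ^ p) ^ (1 / (2 - p)) := by
            simp_rw [hfP, hgQ, ha, hl2]
            rw [Real.one_rpow, mul_one]
    have hSnn : 0 ≤ ∑' j, a j ^ p := tsum_nonneg fun j => Real.rpow_nonneg (ha0 j) _
    calc (∑' j, a j) ^ 2
        ≤ ((∑' j, a j ^ p) ^ (1 / (2 - p))) ^ 2 := pow_le_pow_left₀ (tsum_nonneg ha0) hB' 2
      _ = (∑' j, a j ^ p) ^ (2 / (2 - p)) := by
          rw [← Real.rpow_natCast _ 2, ← Real.rpow_mul hSnn]
          congr 1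
          ring
      _ ≤ (κ ^ (1 - p / 2)) ^ (2 / (2 - p)) := by
          apply Real.rpow_le_rpow hSnn hlp (by positivity)
      _ = κ := by
          rw [← Real.rpow_mul hκ.le]
          have : (1 - p / 2) * (2 / (2 - p)) = 1 := by field_simp
          rw [this, Real.rpow_one]
end

section
/- For each m ∈ {0,…,p−1} and n, the cyclically shifted Haar vector satisfies Σ_{l,k} |⟨\tilde h_{m,n} − h_{m,n}, h_{l,k}⟩| ≤ 4/(√2 − 1), where the sum ranges over all Haar basis vectors h_{l,k} of ℂ^{2^p}. -/
/-- The discrete Haar wavelet `h_{l,k}` on `ℂ^{2^P}` (0-indexed coordinates):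
`h_{l,k}[j] = 2^{(l-P)/2}` on the first half of the dyadic block
`[k·2^{P-l}, (k+1)·2^{P-l})` and `-2^{(l-P)/2}` on the second half. -/
noncomputable def haarVec (P l k : ℕ) : ℕ → ℂ := fun j =>
  if k * 2 ^ (P - l) ≤ j ∧ j < k * 2 ^ (P - l) + 2 ^ (P - l - 1) then
    (((2 : ℝ) ^ (((l : ℝ) - (P : ℝ)) / 2) : ℝ) : ℂ)
  else if k * 2 ^ (P - l) + 2 ^ (P - l - 1) ≤ j ∧ j < (k + 1) * 2 ^ (P - l) then
    -(((2 : ℝ) ^ (((l : ℝ) - (P : ℝ)) / 2) : ℝ) : ℂ)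
  else 0

/-- Cyclic shift by one: `(shift v)[0] = v[N-1]`, `(shift v)[j] = v[j-1]`. -/
def cyclicShift (N : ℕ) (v : ℕ → ℂ) : ℕ → ℂ := fun j => v ((j + N - 1) % N)

lemma haar_abs_le (P l k j : ℕ) :
    ‖haarVec P l k j‖ ≤ (2:ℝ) ^ (((l:ℝ) - (P:ℝ)) / 2) := by
  have h : (0:ℝ) < (2:ℝ) ^ (((l:ℝ) - (P:ℝ)) / 2) := Real.rpow_pos_of_pos two_pos _
  unfold haarVec
  split_ifs <;> simp [Complex.norm_real, Real.norm_eq_abs, abs_of_pos h, le_of_lt h]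

lemma haar_ne_zero (P l k j : ℕ) (h : haarVec P l k j ≠ 0) :
    k * 2 ^ (P - l) ≤ j ∧ j < (k + 1) * 2 ^ (P - l) := by
  have hB : (2:ℕ) ^ (P - l - 1) ≤ 2 ^ (P - l) := Nat.pow_le_pow_right (by norm_num) (by omega)
  have he : (k + 1) * 2 ^ (P - l) = k * 2 ^ (P - l) + 2 ^ (P - l) := by ring
  unfold haarVec at h
  split_ifs at h with h1 h2
  · exact ⟨h1.1, by rw [he]; exact lt_of_lt_of_le h1.2 (by linarith)⟩
  · exact ⟨le_trans (Nat.le_add_right _ _) h2.1, h2.2⟩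
  · exact absurd rfl h

lemma sum_k (P l j : ℕ) (hl : l < P) (hj : j < 2 ^ P) :
    ∑ k ∈ Finset.range (2 ^ l), ‖haarVec P l k j‖ ≤ (2:ℝ) ^ (((l:ℝ) - (P:ℝ)) / 2) := by
  have hpow : (2:ℕ) ^ l * 2 ^ (P - l) = 2 ^ P := by
    rw [← pow_add]; congr 1; omega
  have hk0 : j / 2 ^ (P - l) ∈ Finset.range (2 ^ l) := by
    rw [Finset.mem_range]
    apply Nat.div_lt_of_lt_mul
    rw [Nat.mul_comm, hpow]; exact hj
  rw [Finset.sum_eq_single_of_mem _ hk0]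
  · exact haar_abs_le _ _ _ _
  · intro k _ hk
    by_contra hne
    have h2 : haarVec P l k j ≠ 0 := by
      intro h0; rw [h0] at hne; simp at hne
    obtain ⟨h3, h4⟩ := haar_ne_zero P l k j h2
    exact hk (Nat.div_eq_of_lt_le h3 h4).symm

lemma geom_bound (P : ℕ) :
    ∑ l ∈ Finset.range P, (2:ℝ) ^ (((l:ℝ) - (P:ℝ)) / 2) ≤ 1 / (Real.sqrt 2 - 1) := by
  have hr : (1:ℝ) < Real.sqrt 2 := by
    rw [show (1:ℝ) = Real.sqrt 1 by simp]
    exact Real.sqrt_lt_sqrt (by norm_num) (by norm_num)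
  have hrpos : (0:ℝ) < Real.sqrt 2 := by linarith
  have key : ∀ l : ℕ, (2:ℝ) ^ (((l:ℝ) - (P:ℝ)) / 2) = Real.sqrt 2 ^ l / Real.sqrt 2 ^ P := by
    intro l
    rw [Real.sqrt_eq_rpow, ← Real.rpow_natCast ((2:ℝ)^(1/2:ℝ)) l, ← Real.rpow_natCast ((2:ℝ)^(1/2:ℝ)) P,
      ← Real.rpow_mul (by norm_num), ← Real.rpow_mul (by norm_num), ← Real.rpow_sub two_pos]
    ring_nf
  simp only [key]
  rw [← Finset.sum_div, geom_sum_eq hr.ne']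
  rw [div_div]
  have h1 : Real.sqrt 2 ^ P - 1 ≤ Real.sqrt 2 ^ P := by linarith
  have h2 : (0:ℝ) < (Real.sqrt 2 - 1) * Real.sqrt 2 ^ P :=
    mul_pos (by linarith) (pow_pos hrpos P)
  calc (Real.sqrt 2 ^ P - 1) / ((Real.sqrt 2 - 1) * Real.sqrt 2 ^ P)
      ≤ Real.sqrt 2 ^ P / ((Real.sqrt 2 - 1) * Real.sqrt 2 ^ P) := by gcongr
    _ = 1 / (Real.sqrt 2 - 1) := by
        rw [eq_div_iff (by linarith : Real.sqrt 2 - 1 ≠ 0)]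
        rw [div_mul_eq_mul_div, div_eq_one_iff_eq h2.ne']
        ring

lemma haar_eval (P m n s B : ℕ) (hs : n * 2^(P-m) = s) (hB : 2^(P-m-1) = B)
    (hA : (n+1) * 2^(P-m) = s + 2*B) (j : ℕ) :
    haarVec P m n j =
      if s ≤ j ∧ j < s + B then (((2:ℝ) ^ (((m:ℝ) - (P:ℝ)) / 2) : ℝ) : ℂ)
      else if s + B ≤ j ∧ j < s + 2*B then -(((2:ℝ) ^ (((m:ℝ) - (P:ℝ)) / 2) : ℝ) : ℂ)
      else 0 := by
  unfold haarVec
  simp only [hA, hs, hB]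

lemma shift_eval (N : ℕ) (v : ℕ → ℂ) (j : ℕ) (h1 : 1 ≤ j) (h2 : j < N) :
    cyclicShift N v j = v (j - 1) := by
  unfold cyclicShift
  congr 1
  rw [show j + N - 1 = (j - 1) + N by omega, Nat.add_mod_right, Nat.mod_eq_of_lt (by omega)]

lemma shift_eval0 (N : ℕ) (v : ℕ → ℂ) (hN : 1 ≤ N) :
    cyclicShift N v 0 = v (N - 1) := by
  unfold cyclicShift
  congr 1
  rw [Nat.zero_add, Nat.mod_eq_of_lt (by omega)]

lemma sumD (P m n : ℕ) (hm : m < P) (hn : n < 2 ^ m) :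
    ∑ j ∈ Finset.range (2 ^ P),
      ‖cyclicShift (2 ^ P) (haarVec P m n) j - haarVec P m n j‖ ≤ 4 := by
  set a : ℝ := (2:ℝ) ^ (((m:ℝ) - (P:ℝ)) / 2) with ha_def
  have ha : 0 < a := Real.rpow_pos_of_pos two_pos _
  have ha1 : a ≤ 1 := by
    apply Real.rpow_le_one_of_one_le_of_nonpos (by norm_num)
    have : (m:ℝ) < (P:ℝ) := by exact_mod_cast hm
    linarith
  obtain ⟨B, hB⟩ : ∃ B, 2^(P-m-1) = B := ⟨_, rfl⟩
  obtain ⟨s, hs⟩ : ∃ s, n * 2^(P-m) = s := ⟨_, rfl⟩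
  have hB1 : 1 ≤ B := hB ▸ Nat.one_le_pow _ _ (by norm_num)
  have hX : 2^(P-m) = 2*B := by
    rw [← hB]
    conv_lhs => rw [show P - m = P - m - 1 + 1 from by omega]
    rw [pow_succ]; ring
  have hA : (n+1) * 2^(P-m) = s + 2*B := by
    rw [Nat.add_mul, one_mul, hs, hX]
  have hsN : s + 2*B ≤ 2^P := by
    rw [← hA]
    calc (n+1) * 2^(P-m) ≤ 2^m * 2^(P-m) := Nat.mul_le_mul_right _ hn
      _ = 2^P := by rw [← pow_add]; congr 1; omega
  obtain ⟨N, hN⟩ : ∃ N, 2^P = N := ⟨_, rfl⟩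
  rw [hN] at hsN ⊢
  have hNpos : 1 ≤ N := by omega
  have h4B : 1 ≤ m → 4*B ≤ N := by
    intro hm1
    have h2m : 2 ≤ 2^m := by
      calc 2 = 2^1 := by norm_num
        _ ≤ 2^m := Nat.pow_le_pow_right (by norm_num) hm1
    calc 4*B = 2 * (2*B) := by ring
      _ ≤ 2^m * 2^(P-m) := by rw [hX]; exact Nat.mul_le_mul_right _ h2m
      _ = N := by rw [← hN, ← pow_add]; congr 1; omega
  have hm0s : m = 0 → n = 0 ∧ s = 0 ∧ N = 2*B := by
    intro hm0
    have hn0 : n = 0 := by subst hm0; simpa using hn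
    refine ⟨hn0, ?_, ?_⟩
    · rw [← hs, hn0, Nat.zero_mul]
    · rw [← hN, ← hX, hm0, Nat.sub_zero]
  have E := haar_eval P m n s B hs hB hA
  have Hpos : ∀ j, s ≤ j → j < s + B → haarVec P m n j = ((a:ℝ):ℂ) := by
    intro j h1 h2; rw [E j, if_pos ⟨h1, h2⟩]
  have Hneg : ∀ j, s + B ≤ j → j < s + 2*B → haarVec P m n j = -((a:ℝ):ℂ) := by
    intro j h1 h2; rw [E j, if_neg (by omega), if_pos ⟨h1, h2⟩]
  have H0 : ∀ j, j < s ∨ s + 2*B ≤ j → haarVec P m n j = 0 := by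
    intro j h; rw [E j, if_neg (by omega), if_neg (by omega)]
  -- distance function
  set D : ℕ → ℝ := fun j => ‖cyclicShift N (haarVec P m n) j - haarVec P m n j‖
    with hD
  -- support
  set S : Finset ℕ := {s, s + B, (s + 2*B) % N} with hS
  have hSsub : S ⊆ Finset.range N := by
    intro x hx
    simp only [hS, Finset.mem_insert, Finset.mem_singleton] at hx
    rw [Finset.mem_range]
    have hmod : (s + 2*B) % N < N := Nat.mod_lt _ (by omega)
    rcases hx with h|h|h <;> omega
  have hzero : ∀ j ∈ Finset.range N, j ∉ S → D j = 0 := by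
    intro j hj hjS
    rw [Finset.mem_range] at hj
    simp only [hS, Finset.mem_insert, Finset.mem_singleton, not_or] at hjS
    obtain ⟨hj1, hj2, hj3⟩ := hjS
    have hjt : j ≠ s + 2*B := by
      rcases Nat.lt_or_ge (s + 2*B) N with h|h
      · rwa [Nat.mod_eq_of_lt h] at hj3
      · omega
    rcases Nat.eq_zero_or_pos j with hj0 | hj0
    · -- j = 0 : then s ≥ 1 and s + 2B < N
      subst hj0
      have hst : s + 2*B < N := by
        rcases Nat.lt_or_ge (s + 2*B) N with h|h
        · exact h
        · exfalso; apply hj3; rw [show s + 2*B = N by omega, Nat.mod_self]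
      simp only [hD]
      rw [shift_eval0 N _ hNpos, H0 (N-1) (Or.inr (by omega)), H0 0 (Or.inl (by omega)),
        sub_self, norm_zero]
    · simp only [hD]
      rw [shift_eval N _ j hj0 hj]
      have key : haarVec P m n (j - 1) = haarVec P m n j := by
        rcases Nat.lt_or_ge j s with h|h
        · rw [H0 _ (Or.inl (by omega)), H0 _ (Or.inl h)]
        · rcases Nat.lt_or_ge j (s + B) with h2|h2
          · rw [Hpos _ (by omega) (by omega), Hpos _ h h2]
          · rcases Nat.lt_or_ge j (s + 2*B) with h3|h3
            · rw [Hneg _ (by omega) (by omega), Hneg _ h2 h3]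
            · rw [H0 _ (Or.inr (by omega)), H0 _ (Or.inr h3)]
      rw [key, sub_self, norm_zero]
  rw [← Finset.sum_subset hSsub hzero]
  -- now evaluate the sum over S
  have habs1 : ‖0 - ((a:ℝ):ℂ)‖ = a := by
    rw [zero_sub, norm_neg, Complex.norm_real, Real.norm_eq_abs, abs_of_pos ha]
  have habs2 : ‖((a:ℝ):ℂ) - -((a:ℝ):ℂ)‖ = 2*a := by
    rw [show ((a:ℝ):ℂ) - -((a:ℝ):ℂ) = (((2*a:ℝ)):ℂ) by push_cast; ring,
      Complex.norm_real, Real.norm_eq_abs, abs_of_pos (by linarith)]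
  have habs3 : ‖-((a:ℝ):ℂ) - 0‖ = a := by
    rw [sub_zero, norm_neg, Complex.norm_real, Real.norm_eq_abs, abs_of_pos ha]
  have hDmid : D (s + B) = 2*a := by
    simp only [hD]
    rw [shift_eval N _ (s+B) (by omega) (by omega),
      Hpos (s+B-1) (by omega) (by omega), Hneg (s+B) (by omega) (by omega), habs2]
  rcases Nat.eq_zero_or_pos m with hm0 | hm1
  · -- m = 0 : s = 0, N = 2B, third point = first point
    obtain ⟨hn0, hs0, hN2B⟩ := hm0s hm0
    have ht : (s + 2*B) % N = 0 := by rw [hs0, Nat.zero_add, ← hN2B, Nat.mod_self]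
    have hSeq : S = {s, s + B} := by
      rw [hS, ht, hs0]
      ext x
      simp only [Finset.mem_insert, Finset.mem_singleton]
      tauto
    rw [hSeq, Finset.sum_pair (by omega)]
    have hD0 : D s = 2*a := by
      simp only [hD]
      rw [hs0, shift_eval0 N _ hNpos,
        Hneg (N-1) (by omega) (by omega), Hpos 0 (by omega) (by omega)]
      rw [show -((a:ℝ):ℂ) - ((a:ℝ):ℂ) = (((-(2*a):ℝ)):ℂ) by push_cast; ring,
        Complex.norm_real, Real.norm_eq_abs, abs_of_neg (by linarith)]
      ring
    rw [hD0, hDmid]; linarith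
  · -- m ≥ 1
    have h4 : 4*B ≤ N := h4B hm1
    have hDs : D s = a := by
      simp only [hD]
      rcases Nat.eq_zero_or_pos s with hs0 | hs0
      · rw [hs0, shift_eval0 N _ hNpos, H0 (N-1) (Or.inr (by omega)),
          Hpos 0 (by omega) (by omega), habs1]
      · rw [shift_eval N _ s (by omega) (by omega), H0 (s-1) (Or.inl (by omega)),
          Hpos s (by omega) (by omega), habs1]
    rcases Nat.lt_or_ge (s + 2*B) N with hlt | hge
    · -- third point is s + 2B
      have ht : (s + 2*B) % N = s + 2*B := Nat.mod_eq_of_lt hlt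
      have hDt : D (s + 2*B) = a := by
        simp only [hD]
        rw [shift_eval N _ (s+2*B) (by omega) hlt,
          Hneg (s+2*B-1) (by omega) (by omega), H0 (s+2*B) (Or.inr (by omega)), habs3]
      rw [hS, ht]
      rw [Finset.sum_insert (by simp only [Finset.mem_insert, Finset.mem_singleton]; omega), Finset.sum_pair (by omega)]
      rw [hDs, hDmid, hDt]; linarith
    · -- s + 2B = N, third point is 0, and s ≥ 2B ≥ 2
      have heq : s + 2*B = N := by omega
      have ht : (s + 2*B) % N = 0 := by rw [heq, Nat.mod_self]
      have hs2 : 2*B ≤ s := by omega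
      have hDt : D 0 = a := by
        simp only [hD]
        rw [shift_eval0 N _ hNpos, Hneg (N-1) (by omega) (by omega),
          H0 0 (Or.inl (by omega)), habs3]
      rw [hS, ht]
      rw [Finset.sum_insert (by simp only [Finset.mem_insert, Finset.mem_singleton]; omega), Finset.sum_pair (by omega)]
      rw [hDs, hDmid, hDt]; linarith


/-- For each scale `m < P` and position `n < 2^m`, the cyclically shifted Haar vector
satisfies `Σ_{l,k} |⟨h̃_{m,n} − h_{m,n}, h_{l,k}⟩| ≤ 4/(√2 − 1)`. -/
theorem stmt_8 (P m n : ℕ) (hm : m < P) (hn : n < 2 ^ m) :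
    ∑ l ∈ Finset.range P, ∑ k ∈ Finset.range (2 ^ l),
      ‖∑ j ∈ Finset.range (2 ^ P),
        (starRingEnd ℂ) (cyclicShift (2 ^ P) (haarVec P m n) j - haarVec P m n j) *
          haarVec P l k j‖ ≤
      4 / (Real.sqrt 2 - 1) := by
  set D : ℕ → ℝ := fun j =>
    ‖cyclicShift (2 ^ P) (haarVec P m n) j - haarVec P m n j‖ with hD
  have hDnn : ∀ j, 0 ≤ D j := fun j => norm_nonneg _
  set C : ℝ := ∑ l ∈ Finset.range P, (2:ℝ) ^ (((l:ℝ) - (P:ℝ)) / 2) with hC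
  have hCnn : 0 ≤ C := Finset.sum_nonneg fun l _ => (Real.rpow_pos_of_pos two_pos _).le
  calc ∑ l ∈ Finset.range P, ∑ k ∈ Finset.range (2 ^ l),
      ‖∑ j ∈ Finset.range (2 ^ P),
        (starRingEnd ℂ) (cyclicShift (2 ^ P) (haarVec P m n) j - haarVec P m n j) *
          haarVec P l k j‖
      ≤ ∑ l ∈ Finset.range P, ∑ k ∈ Finset.range (2 ^ l), ∑ j ∈ Finset.range (2 ^ P),
          D j * ‖haarVec P l k j‖ := by
        apply Finset.sum_le_sum; intro l _
        apply Finset.sum_le_sum; intro k _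
        refine le_trans (norm_sum_le _ _) ?_
        apply Finset.sum_le_sum; intro j _
        rw [norm_mul, Complex.norm_conj]
    _ = ∑ l ∈ Finset.range P, ∑ j ∈ Finset.range (2 ^ P), ∑ k ∈ Finset.range (2 ^ l),
          D j * ‖haarVec P l k j‖ :=
        Finset.sum_congr rfl fun l _ => Finset.sum_comm
    _ = ∑ j ∈ Finset.range (2 ^ P), ∑ l ∈ Finset.range P, ∑ k ∈ Finset.range (2 ^ l),
          D j * ‖haarVec P l k j‖ := Finset.sum_comm
    _ = ∑ j ∈ Finset.range (2 ^ P), D j *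
          (∑ l ∈ Finset.range P, ∑ k ∈ Finset.range (2 ^ l), ‖haarVec P l k j‖) := by
        apply Finset.sum_congr rfl; intro j _
        rw [Finset.mul_sum]
        apply Finset.sum_congr rfl; intro l _
        rw [Finset.mul_sum]
    _ ≤ ∑ j ∈ Finset.range (2 ^ P), D j * C := by
        apply Finset.sum_le_sum; intro j hj
        apply mul_le_mul_of_nonneg_left _ (hDnn j)
        apply Finset.sum_le_sum; intro l hl
        exact sum_k P l j (Finset.mem_range.mp hl) (Finset.mem_range.mp hj)
    _ = (∑ j ∈ Finset.range (2 ^ P), D j) * C := by rw [Finset.sum_mul]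
    _ ≤ 4 * (1 / (Real.sqrt 2 - 1)) := by
        apply mul_le_mul (sumD P m n hm hn) (geom_bound P) hCnn (by norm_num)
    _ = 4 / (Real.sqrt 2 - 1) := by ring
end
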